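/- For all integers n ≥ 0, a ≥ 0, b ≥ 0, and c ≥ 0, F_{n+a}·F_{n+b}·F_{n+c} - F_n·F_{n+a}·F_{n+b+c} + F_n·F_{n+b}·F_{n+c+a} - F_n·F_{n+c}·F_{n+a+b} = (-1)^n·(F_a·F_b·F_{n+c} - F_c·F_a·F_{n+b} + F_b·F_c·F_{n+a}). -/
import Mathlib

lemma fib_n_add (n x : ℕ) : (Nat.fib (n + x) : ℤ) =
    (Nat.fib n : ℤ) * ((Nat.fib (x + 1) : ℤ) - Nat.fib x) + (Nat.fib (n + 1) : ℤ) * Nat.fib x := by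
  cases x with
  | zero => simp
  | succ x =>
      have h := Nat.fib_add n x
      have h2 : Nat.fib (x + 2) = Nat.fib x + Nat.fib (x + 1) := Nat.fib_add_two
      push_cast [show n + (x + 1) = n + x + 1 from rfl, h, h2]
      ring

lemma cassini (n : ℕ) : (Nat.fib (n + 1) : ℤ) ^ 2 - (Nat.fib (n + 1) : ℤ) * Nat.fib n
    - (Nat.fib n : ℤ) ^ 2 = (-1) ^ n := by
  induction n with
  | zero => simp
  | succ n ih =>
      have h2 : Nat.fib (n + 2) = Nat.fib n + Nat.fib (n + 1) := Nat.fib_add_two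
      push_cast [h2, pow_succ]
      push_cast at ih
      linarith [ih]

theorem stmt_14 (n a b c : ℕ) :
    (Nat.fib (n + a) : ℤ) * Nat.fib (n + b) * Nat.fib (n + c) -
      (Nat.fib n : ℤ) * Nat.fib (n + a) * Nat.fib (n + b + c) +
      (Nat.fib n : ℤ) * Nat.fib (n + b) * Nat.fib (n + c + a) -
      (Nat.fib n : ℤ) * Nat.fib (n + c) * Nat.fib (n + a + b) =
      (-1) ^ n * ((Nat.fib a : ℤ) * Nat.fib b * Nat.fib (n + c) -
        (Nat.fib c : ℤ) * Nat.fib a * Nat.fib (n + b) +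
        (Nat.fib b : ℤ) * Nat.fib c * Nat.fib (n + a)) := by
  have hbc : n + b + c = n + (b + c) := by ring
  have hca : n + c + a = n + (c + a) := by ring
  have hab : n + a + b = n + (a + b) := by ring
  rw [hbc, hca, hab, fib_n_add n a, fib_n_add n b, fib_n_add n c,
    fib_n_add n (b + c), fib_n_add n (c + a), fib_n_add n (a + b),
    fib_n_add b c, fib_n_add c a, fib_n_add a b]
  have e1 := Nat.fib_add b c
  have e2 := Nat.fib_add c a
  have e3 := Nat.fib_add a b
  have e1' : (Nat.fib (b + c + 1) : ℤ) = Nat.fib b * Nat.fib c + Nat.fib (b + 1) * Nat.fib (c + 1) := by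
    exact_mod_cast congrArg (Nat.cast : ℕ → ℤ) e1
  have e2' : (Nat.fib (c + a + 1) : ℤ) = Nat.fib c * Nat.fib a + Nat.fib (c + 1) * Nat.fib (a + 1) := by
    exact_mod_cast congrArg (Nat.cast : ℕ → ℤ) e2
  have e3' : (Nat.fib (a + b + 1) : ℤ) = Nat.fib a * Nat.fib b + Nat.fib (a + 1) * Nat.fib (b + 1) := by
    exact_mod_cast congrArg (Nat.cast : ℕ → ℤ) e3
  rw [e1', e2', e3']
  set p := (Nat.fib n : ℤ)
  set q := (Nat.fib (n + 1) : ℤ)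
  set A := (Nat.fib a : ℤ); set A1 := (Nat.fib (a + 1) : ℤ)
  set B := (Nat.fib b : ℤ); set B1 := (Nat.fib (b + 1) : ℤ)
  set C := (Nat.fib c : ℤ); set C1 := (Nat.fib (c + 1) : ℤ)
  have hc := cassini n
  linear_combination (A * B * (p * (C1 - C) + q * C) - C * A * (p * (B1 - B) + q * B)
    + B * C * (p * (A1 - A) + q * A)) * hc
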